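/- Let (A, o) be a regular local ring of dimension n, let z_1, ..., z_n be a regular system of parameters of A, and let I and J be ideals of A each generated by a subset of {z_1, ..., z_n} (more generally, each generated by part of some regular system of parameters of A). Then the ideal I + J is generated by part of a regular system of parameters of A; namely, if the images of I and J in o/o² together span a t-dimensional subspace W of o/o², and z'_1, ..., z'_t are elements of I + J whose images in o/o² form a basis of W, then I + J = (z'_1, ..., z'_t)A. -/

import Mathlib

open IsLocalRing

/-- A regular local ring: a Noetherian local ring whose maximal ideal is generated by
`dim A` elements. -/
def IsRegularLocalRing' (A : Type*) [CommRing A] : Prop :=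
  IsNoetherianRing A ∧ ∃ h : IsLocalRing A, ∃ s : Finset A,
    Ideal.span (s : Set A) = @IsLocalRing.maximalIdeal A _ h ∧
    (s.card : WithBot (WithTop ℕ)) = ringKrullDim A

lemma artinianModuleOfMaxAnn {B : Type*} [CommRing B] {M : Ideal B} (hM : M.IsMaximal)
    (V : Type*) [AddCommGroup V] [Module B V] [Module.Finite B V]
    (hMV : ∀ a ∈ M, ∀ v : V, a • v = 0) : IsArtinian B V := by
  have hT : Module.IsTorsionBySet B V M := fun v a => hMV a.1 a.2 v
  letI := hT.module
  haveI : IsScalarTower B (B ⧸ M) V := hT.isScalarTower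
  letI : Field (B ⧸ M) := Ideal.Quotient.field M
  haveI : Module.Finite (B ⧸ M) V := Module.Finite.of_restrictScalars_finite B (B ⧸ M) V
  haveI hart : IsArtinian (B ⧸ M) V := isArtinian_of_fg_of_artinian'
  -- transfer Artinian along the surjection `B → B ⧸ M`
  have hwf := (isArtinian_iff (B ⧸ M) V).mp hart
  refine (isArtinian_iff B V).mpr ?_
  let g : Submodule B V → Submodule (B ⧸ M) V := fun N =>
    { carrier := N
      add_mem' := fun ha hb => N.add_mem ha hb
      zero_mem' := N.zero_mem
      smul_mem' := by
        rintro ⟨a⟩ v hv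
        exact N.smul_mem a hv }
  have hg : ∀ {N N' : Submodule B V}, N < N' → g N < g N' := by
    intro N N' h
    refine lt_of_le_of_ne (fun x hx => h.1 hx) (fun he => h.ne ?_)
    have : (g N : Set V) = (g N' : Set V) := by rw [he]
    ext x
    constructor
    · intro hx; exact (show x ∈ (g N' : Set V) from this ▸ hx)
    · intro hx; exact (show x ∈ (g N : Set V) from this ▸ hx)
  exact Subrelation.wf hg (InvImage.wf g hwf)

lemma isArtinianRingOfMaxPow (B : Type*) [CommRing B] [IsNoetherianRing B]
    {M : Ideal B} (hM : M.IsMaximal) (c : ℕ) (hc : M ^ c = ⊥) : IsArtinianRing B := by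
  have key : ∀ i : ℕ, IsArtinian B (B ⧸ (M ^ i : Submodule B B)) := by
    intro i; induction i with
    | zero =>
      rw [pow_zero, Ideal.one_eq_top]
      haveI : Subsingleton (B ⧸ (⊤ : Submodule B B)) :=
        Submodule.Quotient.subsingleton_iff.mpr rfl
      haveI : Finite (B ⧸ (⊤ : Submodule B B)) := Finite.of_subsingleton
      exact isArtinian_of_finite
    | succ i ih =>
      have hle : (M ^ (i+1) : Submodule B B) ≤ M ^ i := Ideal.pow_le_pow_right (Nat.le_succ i)
      refine (isArtinian_iff_submodule_quotient
        (Submodule.map (M ^ (i+1) : Submodule B B).mkQ (M ^ i : Submodule B B))).mpr ⟨?_, ?_⟩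
      · haveI : Module.Finite B
            (Submodule.map (M ^ (i+1) : Submodule B B).mkQ (M ^ i : Submodule B B)) :=
          Module.Finite.iff_fg.mpr
            ((IsNoetherian.noetherian (M ^ i : Submodule B B)).map _)
        refine artinianModuleOfMaxAnn hM _ ?_
        rintro a ha ⟨v, hv⟩
        obtain ⟨u, hu, rfl⟩ := hv
        ext
        show a • ((M ^ (i+1) : Submodule B B).mkQ u) = 0
        rw [← map_smul, Submodule.mkQ_apply, Submodule.Quotient.mk_eq_zero]
        have : a • u ∈ M * M ^ i := Ideal.mul_mem_mul ha hu
        rwa [← pow_succ'] at this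
      · exact isArtinian_of_linearEquiv
          (Submodule.quotientQuotientEquivQuotient _ _ hle).symm
  have := key c
  rw [show (M ^ c : Submodule B B) = ⊥ from hc] at this
  exact isArtinian_of_linearEquiv (Submodule.quotEquivOfEqBot _ rfl)

/-- Krull's principal ideal theorem (local form): if the maximal ideal `m` of a Noetherian
local ring is the only prime containing `x ∈ m`, then any prime `q ≠ m` contains no prime
strictly smaller: more precisely for primes `r ≤ q` we get `q ≤ r`. -/
lemma pit_local (A : Type*) [CommRing A] [IsNoetherianRing A] [IsLocalRing A]
    (x : A) (hxm : x ∈ maximalIdeal A)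
    (hx : ∀ p : Ideal A, p.IsPrime → x ∈ p → p = maximalIdeal A)
    (q : Ideal A) (hq : q.IsPrime) (hqm : q ≠ maximalIdeal A)
    (r : Ideal A) (hr : r.IsPrime) (hrq : r ≤ q) : q ≤ r := by
  classical
  have hxq : x ∉ q := fun h => hqm (hx q hq h)
  set Aq := Localization.AtPrime q with hAq
  set φ := algebraMap A Aq with hφ
  haveI : IsNoetherianRing Aq := IsLocalization.isNoetherianRing q.primeCompl Aq ‹_›
  -- symbolic powers
  set Q : ℕ → Ideal A := fun n => Ideal.comap φ ((Ideal.map φ q) ^ n) with hQ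
  have hQanti : ∀ n, Q (n + 1) ≤ Q n :=
    fun n => Ideal.comap_mono (Ideal.pow_le_pow_right (Nat.le_succ n))
  -- the quotient by (x) is Artinian
  set B := A ⧸ (Ideal.span {x} : Ideal A) with hB
  set π := Ideal.Quotient.mk (Ideal.span {x} : Ideal A) with hπ
  have hπsurj : Function.Surjective π := Ideal.Quotient.mk_surjective
  haveI : Nontrivial B := Ideal.Quotient.nontrivial_iff.mpr (by
    intro h
    exact (maximalIdeal.isMaximal A).ne_top (top_le_iff.mp
      (h ▸ (Ideal.span_le.mpr (Set.singleton_subset_iff.mpr hxm)) : (⊤ : Ideal A) ≤ _)))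
  have hBprime : ∀ p : Ideal B, p.IsPrime → p = Ideal.map π (maximalIdeal A) := by
    intro p hp
    have h1 : (Ideal.comap π p).IsPrime := hp.comap π
    have h2 : x ∈ Ideal.comap π p := by
      have : π x = 0 := Ideal.Quotient.eq_zero_iff_mem.mpr (Ideal.subset_span rfl)
      simp [Ideal.mem_comap, this]
    have h3 : Ideal.comap π p = maximalIdeal A := hx _ h1 h2
    rw [← Ideal.map_comap_of_surjective π hπsurj p, h3]
  obtain ⟨Mx, hMx⟩ := Ideal.exists_maximal B
  have hMx0 : Mx = Ideal.map π (maximalIdeal A) := hBprime Mx hMx.isPrime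
  have hM0max : (Ideal.map π (maximalIdeal A)).IsMaximal := hMx0 ▸ hMx
  have hnil : nilradical B = Ideal.map π (maximalIdeal A) := by
    rw [nilradical_eq_sInf]
    have hset : {J : Ideal B | J.IsPrime} = {Ideal.map π (maximalIdeal A)} := by
      ext J
      constructor
      · intro h; exact hBprime J h
      · intro h
        have hJ : J = Ideal.map π (maximalIdeal A) := h
        exact hJ ▸ hM0max.isPrime
    rw [hset, sInf_singleton]
  obtain ⟨cN, hcN⟩ := IsNoetherianRing.isNilpotent_nilradical B
  rw [hnil] at hcN
  haveI : IsArtinianRing B := isArtinianRingOfMaxPow B hM0max cN hcN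
  -- the chain of images of symbolic powers stabilizes
  have hQmono : ∀ {a b : ℕ}, a ≤ b → Q b ≤ Q a := by
    intro a b h
    induction h with
    | refl => exact le_rfl
    | step h ih => exact le_trans (hQanti _) ih
  have hchain : ∃ N, Ideal.map π (Q N) = Ideal.map π (Q (N + 1)) := by
    obtain ⟨N, hN⟩ := IsArtinian.monotone_stabilizes
      (⟨fun n => Ideal.map π (Q n), fun a b h => Ideal.map_mono (hQmono h)⟩ :
        ℕ →o (Ideal B)ᵒᵈ)
    exact ⟨N, hN (N + 1) (Nat.le_succ N)⟩
  obtain ⟨N, hN⟩ := hchain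
  -- key inclusion
  have key : Q N ≤ Q (N + 1) ⊔ (maximalIdeal A) • Q N := by
    intro f hf
    have h1 : f ∈ Ideal.comap π (Ideal.map π (Q (N + 1))) := by
      rw [← hN]
      exact Ideal.le_comap_map hf
    rw [Ideal.comap_map_of_surjective π hπsurj, ← RingHom.ker_eq_comap_bot,
      Ideal.mk_ker] at h1
    obtain ⟨g, hg, k, hk, hgk⟩ := Submodule.mem_sup.mp h1
    obtain ⟨a, rfl⟩ := Ideal.mem_span_singleton'.mp hk
    have hax : a * x ∈ Q N := by
      have : a * x = f - g := by rw [← hgk]; ring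
      rw [this]
      exact sub_mem hf (hQanti N hg)
    have ha : a ∈ Q N := by
      have hu : IsUnit (φ x) := IsLocalization.map_units Aq (⟨x, hxq⟩ : q.primeCompl)
      have : φ x * φ a ∈ (Ideal.map φ q) ^ N := by
        rw [← map_mul, mul_comm]
        exact hax
      exact Ideal.mem_comap.mpr ((Ideal.unit_mul_mem_iff_mem _ hu).mp this)
    refine Submodule.mem_sup.mpr ⟨g, hg, a * x, ?_, hgk⟩
    rw [mul_comm, Ideal.smul_eq_mul]
    exact Ideal.mul_mem_mul hxm ha
  have hQeq : Q N = Q (N + 1) :=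
    le_antisymm (Submodule.le_of_le_smul_of_le_jacobson_bot (IsNoetherian.noetherian _)
      (le_of_eq (IsLocalRing.jacobson_eq_maximalIdeal ⊥ bot_ne_top).symm) key) (hQanti N)
  -- push to the localization and apply Nakayama there
  have hmapQ : ∀ n, Ideal.map φ (Q n) = (Ideal.map φ q) ^ n := fun n =>
    IsLocalization.map_comap q.primeCompl Aq _
  have hpow : (Ideal.map φ q) ^ N = ⊥ := by
    have h1 : (Ideal.map φ q) ^ N = (Ideal.map φ q) ^ (N + 1) := by
      rw [← hmapQ, ← hmapQ, hQeq]
    refine Submodule.eq_bot_of_le_smul_of_le_jacobson_bot (Ideal.map φ q) _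
      (IsNoetherian.noetherian _) ?_ ?_
    · rw [Ideal.smul_eq_mul, mul_comm, ← pow_succ]
      exact le_of_eq h1
    · rw [IsLocalRing.jacobson_eq_maximalIdeal ⊥ bot_ne_top,
        ← Localization.AtPrime.map_eq_maximalIdeal]
  -- conclude
  have hdisj : Disjoint (q.primeCompl : Set A) (r : Set A) := by
    rw [Set.disjoint_left]
    intro a ha har
    exact ha (hrq har)
  have hrp : (Ideal.map φ r).IsPrime :=
    IsLocalization.isPrime_of_isPrime_disjoint q.primeCompl Aq r hr hdisj
  intro y hy
  have h1 : φ y ∈ Ideal.map φ q := Ideal.mem_map_of_mem φ hy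
  have h2 : (φ y) ^ N ∈ (Ideal.map φ q) ^ N := Ideal.pow_mem_pow h1 N
  rw [hpow] at h2
  have h3 : φ y ∈ Ideal.map φ r := hrp.mem_of_pow_mem N (by
    rw [Submodule.mem_bot] at h2
    rw [h2]
    exact Ideal.zero_mem _)
  have h4 : y ∈ Ideal.comap φ (Ideal.map φ r) := Ideal.mem_comap.mpr h3
  exact (IsLocalization.comap_map_of_isPrime_disjoint q.primeCompl Aq hr hdisj).le h4

/-- Generalized principal ideal theorem / dimension bound, local version: if every prime of
a Noetherian local ring containing a finite set `S ⊆ m` of cardinality `≤ d` is the maximal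
ideal, then any chain of primes ending at the maximal ideal has length at most `d`. -/
lemma local_gpit (d : ℕ) : ∀ (A : Type u_1) [CommRing A] [IsNoetherianRing A] [IsLocalRing A]
    (S : Finset A), S.card ≤ d → (↑S : Set A) ⊆ (maximalIdeal A : Set A) →
    (∀ p : Ideal A, p.IsPrime → (↑S : Set A) ⊆ ↑p → p = maximalIdeal A) →
    ∀ c : LTSeries (PrimeSpectrum A), c.last.asIdeal = maximalIdeal A → c.length ≤ d := by
  induction d with
  | zero =>
    intro A _ _ _ S hcard hSm hSp c hlast
    by_contra h
    push_neg at h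
    have hne : c.length ≠ 0 := by omega
    have h1 : c.eraseLast.last < c.last := c.eraseLast_last_rel_last hne
    have hS0 : S = ∅ := Finset.card_eq_zero.mp (Nat.le_zero.mp hcard)
    have h2 : c.eraseLast.last.asIdeal = maximalIdeal A := by
      refine hSp _ c.eraseLast.last.isPrime ?_
      rw [hS0]; simp
    exact (ne_of_lt h1) (PrimeSpectrum.ext (h2.trans hlast.symm))
  | succ d ih =>
    intro A _ _ _ S hcard hSm hSp c hlast
    rcases Nat.eq_zero_or_pos c.length with h0 | hpos
    · omega
    classical
    have hq0lt : c.eraseLast.last < c.last := c.eraseLast_last_rel_last (by omega)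
    set q₀ := c.eraseLast.last with hq₀
    have hq0ltm : q₀.asIdeal < maximalIdeal A := hlast ▸ hq0lt
    -- a maximal prime `q` with `q₀ ≤ q < m`
    have hmaxex := (set_has_maximal_iff_noetherian.mpr ‹IsNoetherianRing A›)
      {p : Ideal A | p.IsPrime ∧ q₀.asIdeal ≤ p ∧ p < maximalIdeal A}
      ⟨q₀.asIdeal, q₀.isPrime, le_rfl, hq0ltm⟩
    obtain ⟨qI0, ⟨hqprime0, hq0q0, hqltm0⟩, hqmax0⟩ := hmaxex
    let qI : Ideal A := qI0
    have hqprime : qI.IsPrime := hqprime0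
    have hq0q : q₀.asIdeal ≤ qI := hq0q0
    have hqltm : qI < maximalIdeal A := hqltm0
    have hqmax : ∀ I : Ideal A, (I.IsPrime ∧ q₀.asIdeal ≤ I ∧ I < maximalIdeal A) → ¬ qI < I :=
      fun I hI => hqmax0 I hI
    -- an element of S outside q
    have hnot : ¬ (↑S : Set A) ⊆ ↑qI := fun hsub => (ne_of_lt hqltm) (hSp qI hqprime hsub)
    obtain ⟨x₁, hx₁S, hx₁q⟩ := Set.not_subset.mp hnot
    have hx₁S' : x₁ ∈ S := hx₁S
    -- every prime containing qI and x₁ is m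
    have hprimeover : ∀ p : Ideal A, p.IsPrime → qI ≤ p → x₁ ∈ p → p = maximalIdeal A := by
      intro p hp hqp hx1p
      have h1 : qI < p := lt_of_le_of_ne hqp (fun he => hx₁q (he ▸ hx1p))
      have h2 : p ≤ maximalIdeal A := IsLocalRing.le_maximalIdeal hp.ne_top
      rcases lt_or_eq_of_le h2 with h3 | h3
      · exact absurd h1 (hqmax p ⟨hp, le_trans hq0q hqp, h3⟩)
      · exact h3
    -- radical relation
    have hrad : ∀ x ∈ S, ∃ (nx : ℕ) (yx ax : A), yx ∈ qI ∧ x ^ nx = yx + ax * x₁ := by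
      intro s hs
      have hsm : s ∈ maximalIdeal A := hSm hs
      have hmle : maximalIdeal A ≤ Ideal.radical (qI ⊔ Ideal.span {x₁}) := by
        rw [Ideal.radical_eq_sInf]
        refine le_sInf ?_
        rintro p ⟨hle, hp⟩
        have := hprimeover p hp (le_trans le_sup_left hle)
          (hle (le_sup_right (a := qI) (Ideal.subset_span rfl)))
        exact le_of_eq this.symm
      obtain ⟨nx, hnx⟩ := Ideal.mem_radical_iff.mp (hmle hsm)
      obtain ⟨yx, hyx, k, hk, hsum⟩ := Submodule.mem_sup.mp hnx
      obtain ⟨ax, rfl⟩ := Ideal.mem_span_singleton'.mp hk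
      exact ⟨nx, yx, ax, hyx, hsum.symm⟩
    choose nn yy aa hyy hrel using hrad
    set T : Finset A := (S.erase x₁).attach.image
      (fun s => yy s.1 (Finset.mem_of_mem_erase s.2)) with hT
    have hTcard : T.card ≤ d := by
      have h1 : T.card ≤ (S.erase x₁).attach.card := Finset.card_image_le
      rw [Finset.card_attach, Finset.card_erase_of_mem hx₁S'] at h1
      omega
    have hTq : (↑T : Set A) ⊆ ↑qI := by
      intro t ht
      obtain ⟨s, _, rfl⟩ := Finset.mem_image.mp ht
      exact hyy _ _
    -- qI is the unique prime between T and qI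
    have hqmin : ∀ p : Ideal A, p.IsPrime → (↑T : Set A) ⊆ ↑p → p ≤ qI → p = qI := by
      intro rI hrI hTr hrq
      set π := Ideal.Quotient.mk rI with hπdef
      have hπsurj : Function.Surjective π := Ideal.Quotient.mk_surjective
      haveI : Nontrivial (A ⧸ rI) := Ideal.Quotient.nontrivial_iff.mpr hrI.ne_top
      haveI : IsLocalRing (A ⧸ rI) := IsLocalRing.of_surjective' π hπsurj
      have hcomapM : Ideal.comap π (maximalIdeal (A ⧸ rI)) = maximalIdeal A :=
        IsLocalRing.eq_maximalIdeal (Ideal.comap_isMaximal_of_surjective π hπsurj)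
      have hmapm : Ideal.map π (maximalIdeal A) = maximalIdeal (A ⧸ rI) := by
        conv_rhs => rw [← Ideal.map_comap_of_surjective π hπsurj (maximalIdeal (A ⧸ rI))]
        rw [hcomapM]
      have hrle : ∀ p : Ideal (A ⧸ rI), rI ≤ Ideal.comap π p := by
        intro p t ht
        show π t ∈ p
        rw [Ideal.Quotient.eq_zero_iff_mem.mpr ht]
        exact p.zero_mem
      have hhyp : ∀ p : Ideal (A ⧸ rI), p.IsPrime → π x₁ ∈ p →
          p = maximalIdeal (A ⧸ rI) := by
        intro p hp hmem
        have h1 : (Ideal.comap π p).IsPrime := hp.comap π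
        have hSsub : (↑S : Set A) ⊆ ↑(Ideal.comap π p) := by
          intro s hs
          by_cases hsx : s = x₁
          · exact hsx ▸ hmem
          · have hs' : s ∈ S.erase x₁ := Finset.mem_erase.mpr ⟨hsx, hs⟩
            have hyT : yy s hs ∈ T := Finset.mem_image.mpr
              ⟨⟨s, hs'⟩, Finset.mem_attach _ _, rfl⟩
            have hyp' : yy s hs ∈ Ideal.comap π p := hrle p (hTr hyT)
            have hpow : s ^ (nn s hs) ∈ Ideal.comap π p := by
              rw [hrel s hs]
              exact Ideal.add_mem _ hyp' (Ideal.mul_mem_left _ _ hmem)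
            exact h1.mem_of_pow_mem _ hpow
        have h2 := hSp _ h1 hSsub
        rw [← Ideal.map_comap_of_surjective π hπsurj p, h2, hmapm]
      have hkerr : RingHom.ker π = rI := Ideal.mk_ker
      have hqbarprime : (Ideal.map π qI).IsPrime :=
        Ideal.map_isPrime_of_surjective hπsurj (by rw [hkerr]; exact hrq)
      have hcomapq : Ideal.comap π (Ideal.map π qI) = qI := by
        rw [Ideal.comap_map_of_surjective π hπsurj, ← RingHom.ker_eq_comap_bot, hkerr,
          sup_eq_left.mpr hrq]
      have hqbarne : Ideal.map π qI ≠ maximalIdeal (A ⧸ rI) := by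
        intro h
        have := hcomapq
        rw [h, hcomapM] at this
        exact (ne_of_lt hqltm) this.symm
      haveI : IsDomain (A ⧸ rI) := Ideal.Quotient.isDomain rI
      have hx1m : π x₁ ∈ maximalIdeal (A ⧸ rI) := by
        rw [← hmapm]
        exact Ideal.mem_map_of_mem π (hSm hx₁S)
      have hfin := pit_local (A ⧸ rI) (π x₁) hx1m hhyp (Ideal.map π qI) hqbarprime
        hqbarne ⊥ Ideal.bot_prime bot_le
      have hle : qI ≤ rI := by
        intro t ht
        have h3 : π t ∈ (⊥ : Ideal (A ⧸ rI)) := hfin (Ideal.mem_map_of_mem π ht)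
        rw [Submodule.mem_bot] at h3
        exact Ideal.Quotient.eq_zero_iff_mem.mp h3
      exact le_antisymm hrq hle
    -- the A-side chain `e` of length ≥ c.length - 1 ending at qI with all entries ≤ qI
    have hqpt : (⟨qI, hqprime⟩ : PrimeSpectrum A).asIdeal = qI := rfl
    obtain ⟨e, helen, helast, hele⟩ :
        ∃ e : LTSeries (PrimeSpectrum A), c.length - 1 ≤ e.length ∧
          e.last.asIdeal = qI ∧ ∀ i, (e i).asIdeal ≤ qI := by
      rcases eq_or_lt_of_le hq0q with heq | hlt
      · refine ⟨c.eraseLast, by simp, heq, fun i => ?_⟩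
        rw [← heq]
        exact LTSeries.monotone c.eraseLast (Fin.le_last i)
      · refine ⟨c.eraseLast.snoc ⟨qI, hqprime⟩
          ((PrimeSpectrum.asIdeal_lt_asIdeal _ _).mp hlt), by simp, by simp, fun i => ?_⟩
        have h := LTSeries.monotone (c.eraseLast.snoc ⟨qI, hqprime⟩
          ((PrimeSpectrum.asIdeal_lt_asIdeal _ _).mp hlt)) (Fin.le_last i)
        have h2 : (c.eraseLast.snoc ⟨qI, hqprime⟩
            ((PrimeSpectrum.asIdeal_lt_asIdeal _ _).mp hlt)).last = ⟨qI, hqprime⟩ :=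
          RelSeries.last_snoc _ _ _
        rw [show ((c.eraseLast.snoc ⟨qI, hqprime⟩
            ((PrimeSpectrum.asIdeal_lt_asIdeal _ _).mp hlt)) (Fin.last _)) =
            (c.eraseLast.snoc ⟨qI, hqprime⟩
            ((PrimeSpectrum.asIdeal_lt_asIdeal _ _).mp hlt)).last from rfl, h2] at h
        exact h
    -- move to the localization at qI
    haveI : qI.IsPrime := hqprime
    set Aq := Localization.AtPrime qI with hAqdef
    set φ := algebraMap A Aq with hφdef
    haveI : IsNoetherianRing Aq := IsLocalization.isNoetherianRing qI.primeCompl Aq ‹_›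
    have hdisj : ∀ {p : Ideal A}, p ≤ qI → Disjoint (qI.primeCompl : Set A) (p : Set A) := by
      intro p hle
      rw [Set.disjoint_left]
      intro a ha hap
      exact ha (hle hap)
    have hmapprime : ∀ {p : Ideal A}, p.IsPrime → p ≤ qI → (Ideal.map φ p).IsPrime :=
      fun hp hle => IsLocalization.isPrime_of_isPrime_disjoint qI.primeCompl Aq _ hp (hdisj hle)
    have hcomapmap : ∀ {p : Ideal A}, p.IsPrime → p ≤ qI →
        Ideal.comap φ (Ideal.map φ p) = p :=
      fun hp hle => IsLocalization.comap_map_of_isPrime_disjoint qI.primeCompl Aq hp (hdisj hle)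
    have hmaplt : ∀ {p p' : Ideal A}, p.IsPrime → p'.IsPrime → p ≤ qI → p' ≤ qI →
        p < p' → Ideal.map φ p < Ideal.map φ p' := by
      intro p p' hp hp' hle hle' hlt
      refine lt_of_le_of_ne (Ideal.map_mono (le_of_lt hlt)) ?_
      intro he
      have := congrArg (Ideal.comap φ) he
      rw [hcomapmap hp hle, hcomapmap hp' hle'] at this
      exact (ne_of_lt hlt) this
    set c₂ : LTSeries (PrimeSpectrum Aq) :=
      ⟨e.length, fun i => ⟨Ideal.map φ (e i).asIdeal, hmapprime (e i).isPrime (hele i)⟩,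
        fun i => by
          have hstep := e.step i
          exact (PrimeSpectrum.asIdeal_lt_asIdeal _ _).mp
            (hmaplt (e i.castSucc).isPrime (e i.succ).isPrime (hele _) (hele _)
              ((PrimeSpectrum.asIdeal_lt_asIdeal _ _).mpr hstep))⟩ with hc₂
    have hc₂last : c₂.last.asIdeal = maximalIdeal Aq := by
      show Ideal.map φ (e.last).asIdeal = _
      rw [helast]
      exact Localization.AtPrime.map_eq_maximalIdeal
    -- the image of T in the localization
    have hTq' : (↑(T.image φ) : Set Aq) ⊆ (maximalIdeal Aq : Set Aq) := by
      intro t ht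
      obtain ⟨s, hs, rfl⟩ := Finset.mem_image.mp ht
      rw [← Localization.AtPrime.map_eq_maximalIdeal]
      exact Ideal.mem_map_of_mem φ (hTq hs)
    have hTp' : ∀ p : Ideal Aq, p.IsPrime → (↑(T.image φ) : Set Aq) ⊆ ↑p →
        p = maximalIdeal Aq := by
      intro p hp hsub
      have h1 : Ideal.comap φ p ≤ qI := by
        have h2 : p ≤ maximalIdeal Aq := IsLocalRing.le_maximalIdeal hp.ne_top
        rw [← Localization.AtPrime.map_eq_maximalIdeal] at h2
        intro a ha
        have h3 : φ a ∈ Ideal.map φ qI := h2 ha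
        have h4 : a ∈ Ideal.comap φ (Ideal.map φ qI) := h3
        rwa [hcomapmap hqprime le_rfl] at h4
      have h5 : (↑T : Set A) ⊆ ↑(Ideal.comap φ p) := by
        intro t ht
        exact hsub (Finset.mem_coe.mpr (Finset.mem_image_of_mem φ ht))
      have h6 := hqmin _ (hp.comap φ) h5 h1
      rw [← IsLocalization.map_comap qI.primeCompl Aq p, show Ideal.under A p = qI from h6]
      exact Localization.AtPrime.map_eq_maximalIdeal
    have := ih Aq (T.image φ) (le_trans Finset.card_image_le hTcard) hTq' hTp' c₂ hc₂last
    have : e.length ≤ d := this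
    omega

/-- Krull's height theorem consequence: the Krull dimension of a Noetherian local ring is at
most the number of generators of its maximal ideal. -/
lemma ringKrullDim_le_card_of_span_eq_maximalIdeal (A : Type*) [CommRing A]
    [IsNoetherianRing A] [IsLocalRing A] (S : Finset A)
    (hS : Ideal.span (↑S : Set A) = maximalIdeal A) :
    ringKrullDim A ≤ (S.card : WithBot (WithTop ℕ)) := by
  have hSm : (↑S : Set A) ⊆ ↑(maximalIdeal A) := by
    intro s hs; rw [← hS]; exact Ideal.subset_span hs
  have hSp : ∀ p : Ideal A, p.IsPrime → (↑S : Set A) ⊆ ↑p → p = maximalIdeal A := by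
    intro p hp hsub
    have h1 : maximalIdeal A ≤ p := by rw [← hS]; exact Ideal.span_le.mpr hsub
    exact ((maximalIdeal.isMaximal A).eq_of_le hp.ne_top h1).symm
  have hchain : ∀ c : LTSeries (PrimeSpectrum A), c.length ≤ S.card := by
    intro c
    by_cases hlast : c.last.asIdeal = maximalIdeal A
    · exact local_gpit S.card A S le_rfl hSm hSp c hlast
    · have hlt : c.last.asIdeal < maximalIdeal A :=
        lt_of_le_of_ne (IsLocalRing.le_maximalIdeal c.last.isPrime.ne_top) hlast
      set pt : PrimeSpectrum A := ⟨maximalIdeal A, (maximalIdeal.isMaximal A).isPrime⟩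
      have hlt' : c.last < pt := hlt
      have h2 := local_gpit S.card A S le_rfl hSm hSp (c.snoc pt hlt')
        (by rw [RelSeries.last_snoc])
      rw [RelSeries.snoc_length] at h2
      omega
  show Order.krullDim (PrimeSpectrum A) ≤ _
  refine iSup_le fun c => ?_
  exact Nat.cast_le.mpr (hchain c)

lemma cotangent_li (A : Type*) [CommRing A] [IsNoetherianRing A] [IsLocalRing A]
    (n : ℕ) (hdim : ringKrullDim A = n) (z : Fin n → A)
    (hz : Ideal.span (Set.range z) = maximalIdeal A)
    (zhat : Fin n → maximalIdeal A) (hzhat : ∀ i, (zhat i : A) = z i) :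
    LinearIndependent (ResidueField A)
      (fun i => (maximalIdeal A).toCotangent (zhat i)) := by
  classical
  have hsubinj : Function.Injective (maximalIdeal A : Submodule A A).subtype :=
    Submodule.injective_subtype _
  -- the `zhat` span the maximal ideal as a module
  have hspan_top : Submodule.span A (Set.range zhat) = ⊤ := by
    apply Submodule.map_injective_of_injective hsubinj
    rw [Submodule.map_span, Submodule.map_top, Submodule.range_subtype]
    have himg : (maximalIdeal A : Submodule A A).subtype '' Set.range zhat = Set.range z := by
      ext a
      constructor
      · rintro ⟨w, ⟨i, rfl⟩, rfl⟩
        exact ⟨i, (hzhat i).symm⟩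
      · rintro ⟨i, rfl⟩
        exact ⟨zhat i, ⟨i, rfl⟩, hzhat i⟩
    rw [himg]
    exact hz
  have hcot_span : Submodule.span (ResidueField A)
      (Set.range fun i => (maximalIdeal A).toCotangent (zhat i)) = ⊤ := by
    have := IsLocalRing.CotangentSpace.span_image_eq_top_iff
      (R := A) (s := Set.range zhat) |>.mpr hspan_top
    rwa [← Set.range_comp] at this
  -- finrank of the cotangent space is at most n
  have hfle : Module.finrank (ResidueField A) (CotangentSpace A) ≤ n := by
    have h1 := finrank_span_le_card (R := ResidueField A)
      (Set.range fun i => (maximalIdeal A).toCotangent (zhat i))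
    rw [hcot_span] at h1
    rw [finrank_top] at h1
    refine h1.trans ?_
    rw [Set.toFinset_card]
    exact (Fintype.card_range_le _).trans (by simp)
  -- and at least n, by the dimension bound
  have hfge : n ≤ Module.finrank (ResidueField A) (CotangentSpace A) := by
    set r := Module.finrank (ResidueField A) (CotangentSpace A) with hr
    let b := Module.finBasis (ResidueField A) (CotangentSpace A)
    have hvex : ∀ i : Fin r, ∃ w : maximalIdeal A, (maximalIdeal A).toCotangent w = b i :=
      fun i => (maximalIdeal A).toCotangent_surjective (b i)
    choose v hv using hvex
    have hvspan : Submodule.span A (Set.range v) = ⊤ := by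
      rw [← IsLocalRing.CotangentSpace.span_image_eq_top_iff (R := A) (s := Set.range v)]
      have himg : (maximalIdeal A).toCotangent '' Set.range v = Set.range b := by
        rw [← Set.range_comp]
        exact congrArg Set.range (funext fun i => hv i)
      rw [himg]
      exact b.span_eq
    have hvideal : Ideal.span (Set.range fun i => (v i : A)) = maximalIdeal A := by
      have := congrArg (Submodule.map (maximalIdeal A : Submodule A A).subtype) hvspan
      rw [Submodule.map_span, Submodule.map_top, Submodule.range_subtype] at this
      have himg : (maximalIdeal A : Submodule A A).subtype '' Set.range v =
          Set.range fun i => (v i : A) := by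
        ext a
        constructor
        · rintro ⟨w, ⟨i, rfl⟩, rfl⟩
          exact ⟨i, rfl⟩
        · rintro ⟨i, rfl⟩
          exact ⟨v i, ⟨i, rfl⟩, rfl⟩
      rwa [himg] at this
    set Sfin : Finset A := Finset.image (fun i => (v i : A)) Finset.univ with hSfin
    have hScoe : (↑Sfin : Set A) = Set.range fun i => (v i : A) := by
      rw [hSfin, Finset.coe_image, Finset.coe_univ, Set.image_univ]
    have hSspan : Ideal.span (↑Sfin : Set A) = maximalIdeal A := by rw [hScoe, hvideal]
    have hdimle := ringKrullDim_le_card_of_span_eq_maximalIdeal A Sfin hSspan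
    rw [hdim] at hdimle
    have hcard : Sfin.card ≤ r := Finset.card_image_le.trans (by simp)
    have hnle : n ≤ Sfin.card := by exact Nat.cast_le.mp hdimle
    omega
  exact linearIndependent_of_top_le_span_of_card_eq_finrank (le_of_eq hcot_span.symm)
    (by simp [le_antisymm hfle hfge])

/-- let `(A, o)` be a regular local ring of dimension `n` with a regular
system of parameters `z_1, ..., z_n`, and let `I`, `J` be ideals each generated by part of
a regular system of parameters (e.g. by a subset of `{z_1, ..., z_n}`).  If the images of
`I` and `J` in `o/o²` together span a `t`-dimensional subspace `W` and `z'_1, ..., z'_t`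
are elements of `I + J` whose images in `o/o²` form a basis of `W`, then
`I + J = (z'_1, ..., z'_t)A`; in particular `I + J` is generated by part of a regular
system of parameters of `A`. -/
theorem stmt5 (A : Type*) [CommRing A] [IsNoetherianRing A] [IsLocalRing A]
    (hA : IsRegularLocalRing' A)
    (n : ℕ) (hdim : ringKrullDim A = n) (z : Fin n → A)
    (hz : Ideal.span (Set.range z) = maximalIdeal A)
    (I J : Ideal A)
    (hI : ∃ s ⊆ Set.range z, I = Ideal.span s)
    (hJ : ∃ s ⊆ Set.range z, J = Ideal.span s)
    (t : ℕ) (z' : Fin t → maximalIdeal A) (hz'mem : ∀ j, (z' j : A) ∈ I + J)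
    (hli : LinearIndependent (ResidueField A)
      (fun j => (maximalIdeal A).toCotangent (z' j)))
    (hspan : Submodule.span (ResidueField A)
        (Set.range fun j => (maximalIdeal A).toCotangent (z' j)) =
      Submodule.span (ResidueField A)
        ((maximalIdeal A).toCotangent '' {x : maximalIdeal A | (x : A) ∈ I + J})) :
    I + J = Ideal.span (Set.range fun j => (z' j : A)) ∧
      ∃ (w : Fin n → A), Ideal.span (Set.range w) = maximalIdeal A ∧
        ∃ s ⊆ Set.range w, I + J = Ideal.span s := by
  classical
  obtain ⟨sI, hsI, hIeq⟩ := hI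
  obtain ⟨sJ, hsJ, hJeq⟩ := hJ
  set S : Set A := sI ∪ sJ with hSdef
  have hSz : S ⊆ Set.range z := Set.union_subset hsI hsJ
  have hQ : I + J = Ideal.span S := by
    rw [hSdef, Ideal.span_union, hIeq, hJeq]
    rfl
  refine ⟨?_, z, hz, S, hSz, hQ⟩
  -- elements of the regular system inside the maximal ideal
  have hzmem : ∀ i, z i ∈ maximalIdeal A := fun i =>
    hz ▸ Ideal.subset_span (Set.mem_range_self i)
  set zhat : Fin n → maximalIdeal A := fun i => ⟨z i, hzmem i⟩ with hzhatdef
  have hli_z : LinearIndependent (ResidueField A)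
      (fun i => (maximalIdeal A).toCotangent (zhat i)) :=
    cotangent_li A n hdim z hz zhat (fun i => rfl)
  -- finite generating set of `I + J`
  have hSfinite : S.Finite := (Set.finite_range z).subset hSz
  set Sfin : Finset A := hSfinite.toFinset with hSfindef
  have hScoe : (↑Sfin : Set A) = S := hSfinite.coe_toFinset
  have hSmem : ∀ s ∈ Sfin, s ∈ maximalIdeal A := by
    intro s hs
    have : s ∈ Set.range z := hSz (hScoe ▸ hs)
    obtain ⟨i, rfl⟩ := this
    exact hzmem i
  have hSQ : ∀ s ∈ Sfin, s ∈ I + J := by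
    intro s hs
    rw [hQ]
    exact Ideal.subset_span (hScoe ▸ hs)
  -- the images of the elements of `Sfin` are linearly independent in the cotangent space
  set w : {x // x ∈ Sfin} → (maximalIdeal A).Cotangent :=
    fun s => (maximalIdeal A).toCotangent ⟨s.1, hSmem s.1 s.2⟩ with hwdef
  have hw_li : LinearIndependent (ResidueField A) w := by
    have hex : ∀ s : {x // x ∈ Sfin}, ∃ i, z i = s.1 :=
      fun s => hSz (hScoe ▸ s.2)
    choose ι hι using hex
    have hinj : Function.Injective ι := by
      intro a b hab
      have : z (ι a) = z (ι b) := by rw [hab]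
      rw [hι a, hι b] at this
      exact Subtype.ext this
    have := hli_z.comp ι hinj
    have heq : ((fun i => (maximalIdeal A).toCotangent (zhat i)) ∘ ι) = w := by
      funext s
      have hz2 : zhat (ι s) = ⟨s.1, hSmem s.1 s.2⟩ := Subtype.ext (hι s)
      show (maximalIdeal A).toCotangent (zhat (ι s)) = w s
      rw [hz2]
    rwa [heq] at this
  -- key: (I + J) ∩ m² ⊆ m (I + J)
  have hres : ∀ (a : A) (u : CotangentSpace A), residue A a • u = a • u := fun a u =>
    IsScalarTower.algebraMap_smul (ResidueField A) a u
  have hD : ∀ x, x ∈ I + J → x ∈ (maximalIdeal A) ^ 2 →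
      x ∈ maximalIdeal A * (I + J) := by
    intro x hxQ hx2
    have hxS : x ∈ Submodule.span A (↑Sfin : Set A) := by
      rw [hScoe, ← Ideal.span, ← hQ]
      exact hxQ
    obtain ⟨f, -, hfx⟩ := Submodule.mem_span_finset.mp hxS
    set X : maximalIdeal A := ∑ s ∈ Sfin.attach, f s.1 • (⟨s.1, hSmem s.1 s.2⟩ : maximalIdeal A)
      with hXdef
    have hXcoe : (X : A) = x := by
      rw [hXdef]
      push_cast
      rw [Finset.sum_attach Sfin (fun s => f s • s)]
      exact hfx
    have hX0 : (maximalIdeal A).toCotangent X = 0 :=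
      (Ideal.toCotangent_eq_zero _ _).mpr (by rw [hXcoe]; exact hx2)
    have hXsum : (maximalIdeal A).toCotangent X
        = ∑ s ∈ Sfin.attach, residue A (f s.1) • w s := by
      rw [hXdef, map_sum]
      refine Finset.sum_congr rfl fun s _ => ?_
      rw [map_smul, hres]
    have hcoeff : ∀ s : {x // x ∈ Sfin}, residue A (f s.1) = 0 := by
      intro s
      exact linearIndependent_iff'.mp hw_li Sfin.attach (fun s => residue A (f s.1))
        (by rw [← hXsum, hX0]) s (Finset.mem_attach _ _)
    have hfm : ∀ s ∈ Sfin, f s ∈ maximalIdeal A := by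
      intro s hs
      have := hcoeff ⟨s, hs⟩
      exact Ideal.Quotient.eq_zero_iff_mem.mp this
    rw [← hfx]
    refine Ideal.sum_mem _ fun s hs => ?_
    rw [smul_eq_mul]
    exact Ideal.mul_mem_mul (hfm s hs) (hSQ s hs)
  -- Nakayama
  set P : Ideal A := Ideal.span (Set.range fun j => (z' j : A)) with hPdef
  have hPQ : P ≤ I + J := by
    rw [hPdef, Ideal.span_le]
    rintro _ ⟨j, rfl⟩
    exact hz'mem j
  have hQm : I + J ≤ maximalIdeal A := by
    rw [hQ, ← hz]
    exact Ideal.span_mono hSz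
  have hQle : I + J ≤ P ⊔ (maximalIdeal A) • (I + J) := by
    intro x hx
    have hxm : x ∈ maximalIdeal A := hQm hx
    have hxW : (maximalIdeal A).toCotangent ⟨x, hxm⟩ ∈ Submodule.span (ResidueField A)
        (Set.range fun j => (maximalIdeal A).toCotangent (z' j)) := by
      rw [hspan]
      exact Submodule.subset_span ⟨⟨x, hxm⟩, hx, rfl⟩
    obtain ⟨cf, hcf⟩ := Submodule.mem_span_range_iff_exists_fun _ |>.mp hxW
    have hlift : ∀ j, ∃ a : A, residue A a = cf j := fun j =>
      Ideal.Quotient.mk_surjective (cf j)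
    choose af haf using hlift
    set p : A := ∑ j, af j * (z' j : A) with hpdef
    have hpP : p ∈ P := by
      refine Ideal.sum_mem _ fun j _ => ?_
      exact Ideal.mul_mem_left _ _ (Ideal.subset_span ⟨j, rfl⟩)
    have hpQ : p ∈ I + J := hPQ hpP
    set Y : maximalIdeal A := ⟨x, hxm⟩ - ∑ j, af j • z' j with hYdef
    have hYcoe : (Y : A) = x - p := by
      rw [hYdef, hpdef]
      push_cast
      rfl
    have hY0 : (maximalIdeal A).toCotangent Y = 0 := by
      rw [hYdef, map_sub, map_sum]
      have : ∀ j, (maximalIdeal A).toCotangent (af j • z' j)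
          = cf j • (maximalIdeal A).toCotangent (z' j) := by
        intro j
        rw [map_smul, ← haf j, hres]
      rw [Finset.sum_congr rfl (fun j _ => this j), hcf]
      exact sub_self _
    have hY2 : x - p ∈ (maximalIdeal A) ^ 2 := by
      rw [← hYcoe]
      exact (Ideal.toCotangent_eq_zero _ _).mp hY0
    have hYQ : x - p ∈ I + J := sub_mem hx hpQ
    have hYm : x - p ∈ maximalIdeal A * (I + J) := hD _ hYQ hY2
    refine Submodule.mem_sup.mpr ⟨p, hpP, x - p, ?_, by ring⟩
    rw [Ideal.smul_eq_mul]
    exact hYm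
  have hfinal : I + J ≤ P :=
    Submodule.le_of_le_smul_of_le_jacobson_bot (IsNoetherian.noetherian _)
      (le_of_eq (IsLocalRing.jacobson_eq_maximalIdeal ⊥ bot_ne_top).symm) hQle
  exact le_antisymm hfinal hPQ
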